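/- For the triangle with sides a = k(m²+n²)/(mn), b = k(p²+q²)/(pq), c = k(pn+qm)(pm−qn)/(pqmn), where k,m,n,p,q are rational with mnpq ≠ 0, the Heron expression s(s−a)(s−b)(s−c) with s=(a+b+c)/2 equals (k²(pn+qm)(pm−qn)/(pqmn))², i.e., the area of the triangle is k²(pn+qm)(pm−qn)/(pqmn). -/
import Mathlib

theorem euler_triangle_area (k m n p q a b c s : ℚ)
    (hmnpq : m * n * p * q ≠ 0)
    (ha : a = k * (m^2 + n^2) / (m * n))
    (hb : b = k * (p^2 + q^2) / (p * q))
    (hc : c = k * (p * n + q * m) * (p * m - q * n) / (p * q * m * n))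
    (hs : s = (a + b + c) / 2) :
    s * (s - a) * (s - b) * (s - c) =
      (k^2 * (p * n + q * m) * (p * m - q * n) / (p * q * m * n))^2 := by
  have hm : m ≠ 0 := by rintro rfl; simp at hmnpq
  have hn : n ≠ 0 := by rintro rfl; simp at hmnpq
  have hp : p ≠ 0 := by rintro rfl; simp at hmnpq
  have hq : q ≠ 0 := by rintro rfl; simp at hmnpq
  subst hs ha hb hc
  field_simp
  ring
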